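/- Let X be a metric space, V a real vector space of finite dimension r, ρ a Glaeser operation, and E a bundle of linear subspaces of V over X. Then Ê := ρ^{2r}(E) is a closed subset of X × V. -/

import Mathlib

/-- A bundle of linear subspaces of `V` over `X`: each fibre is a linear subspace. -/
def IsBundle {X V : Type*} [AddCommGroup V] [Module ℝ V] (E : Set (X × V)) : Prop :=
  ∀ a : X, ∃ S : Submodule ℝ V, {v : V | (a, v) ∈ E} = (S : Set V)

/-- A Glaeser operation on bundles of linear subspaces of `V` over `X`:
it maps bundles to bundles, contains the closure, and is local. -/
structure IsGlaeserOperation {X V : Type*} [MetricSpace X] [NormedAddCommGroup V]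
    [NormedSpace ℝ V] (ρ : Set (X × V) → Set (X × V)) : Prop where
  bundle : ∀ E : Set (X × V), IsBundle E → IsBundle (ρ E)
  closure_subset : ∀ E : Set (X × V), IsBundle E → closure E ⊆ ρ E
  isLocal : ∀ E F : Set (X × V), IsBundle E → IsBundle F → ∀ U : Set X, IsOpen U →
    (∀ a ∈ U, {v : V | (a, v) ∈ E} = {v : V | (a, v) ∈ F}) →
    ∀ a ∈ U, {v : V | (a, v) ∈ ρ E} = {v : V | (a, v) ∈ ρ F}

open Module Metric Filter
open scoped RealInnerProductSpace

section Aux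

variable {X V : Type*} [MetricSpace X] [NormedAddCommGroup V] [NormedSpace ℝ V]

lemma GlaeserAux.bundle_iter {ρ : Set (X × V) → Set (X × V)} (hρ : IsGlaeserOperation ρ)
    {E : Set (X × V)} (hE : IsBundle E) (k : ℕ) : IsBundle (ρ^[k] E) := by
  induction k with
  | zero => exact hE
  | succ k ih => rw [Function.iterate_succ_apply']; exact hρ.bundle _ ih

lemma GlaeserAux.iter_le {ρ : Set (X × V) → Set (X × V)} (hρ : IsGlaeserOperation ρ)
    {E : Set (X × V)} (hE : IsBundle E) (k : ℕ) : ρ^[k] E ⊆ ρ^[k + 1] E := by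
  rw [Function.iterate_succ_apply']
  exact subset_closure.trans (hρ.closure_subset _ (GlaeserAux.bundle_iter hρ hE k))

/-- Locality step: if the fibres of levels `k+1` and `k+2` differ at `b`, then every ball
around `b` contains a point where levels `k` and `k+1` differ. -/
lemma GlaeserAux.bad_step {ρ : Set (X × V) → Set (X × V)} (hρ : IsGlaeserOperation ρ)
    {E : Set (X × V)} (hE : IsBundle E) (k : ℕ) (b : X)
    (hb : {v : V | (b, v) ∈ ρ^[k + 1] E} ≠ {v : V | (b, v) ∈ ρ^[k + 2] E})
    (ε : ℝ) (hε : 0 < ε) :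
    ∃ c : X, dist c b < ε ∧ {v : V | (c, v) ∈ ρ^[k] E} ≠ {v : V | (c, v) ∈ ρ^[k + 1] E} := by
  by_contra h
  push_neg at h
  apply hb
  have hloc := hρ.isLocal (ρ^[k] E) (ρ^[k + 1] E) (GlaeserAux.bundle_iter hρ hE k)
    (GlaeserAux.bundle_iter hρ hE (k + 1)) (ball b ε) isOpen_ball
    (fun a ha => h a (mem_ball.mp ha)) b (mem_ball_self hε)
  have e1 : ρ (ρ^[k] E) = ρ^[k + 1] E := (Function.iterate_succ_apply' ρ k E).symm
  have e2 : ρ (ρ^[k + 1] E) = ρ^[k + 2] E := (Function.iterate_succ_apply' ρ (k + 1) E).symm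
  rw [e1, e2] at hloc
  exact hloc

variable [FiniteDimensional ℝ V]

lemma GlaeserAux.le_finrank_of_li {m : ℕ} {T : Submodule ℝ V} {f : Fin m → V}
    (hf : LinearIndependent ℝ f) (hm : ∀ i, f i ∈ T) : m ≤ finrank ℝ T := by
  have hg : LinearIndependent ℝ (fun i => (⟨f i, hm i⟩ : T)) := by
    apply LinearIndependent.of_comp T.subtype
    convert hf
    rfl
  simpa using hg.fintype_card_le_finrank

/-- Semicontinuity via compactness of the Grassmannian: if arbitrarily close to `b` there are
points whose fibre (of `F`) has dimension at least `m`, then there are `m` linearly independent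
vectors `v` with `(b, v)` in the closure of `F`. -/
lemma GlaeserAux.semicont {F : Set (X × V)} {b : X} {m : ℕ}
    (h : ∀ ε : ℝ, 0 < ε → ∃ c : X, dist c b < ε ∧ ∃ S : Submodule ℝ V,
      {v : V | (c, v) ∈ F} = (S : Set V) ∧ m ≤ finrank ℝ S) :
    ∃ f : Fin m → V, LinearIndependent ℝ f ∧ ∀ i, (b, f i) ∈ closure F := by
  have hseq : ∀ n : ℕ, ∃ c : X, dist c b < 1 / (n + 1) ∧ ∃ S : Submodule ℝ V,
      {v : V | (c, v) ∈ F} = (S : Set V) ∧ m ≤ finrank ℝ S := fun n => h _ (by positivity)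
  choose c hc S hS hdim using hseq
  set E' := EuclideanSpace ℝ (Fin (finrank ℝ V)) with hE'
  let e : V ≃L[ℝ] E' := toEuclidean
  let T : ℕ → Submodule ℝ E' := fun n => Submodule.map (e.toLinearEquiv : V →ₗ[ℝ] E') (S n)
  have hTdim : ∀ n, m ≤ finrank ℝ (T n) := by
    intro n
    rw [show (T n : Submodule ℝ E') = Submodule.map (e.toLinearEquiv : V →ₗ[ℝ] E') (S n) from rfl,
      LinearEquiv.finrank_map_eq]
    exact hdim n
  -- orthonormal families of size m inside T n
  let u : ℕ → Fin m → E' := fun n i =>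
    ((stdOrthonormalBasis ℝ (T n)) (Fin.castLE (hTdim n) i) : E')
  have humem : ∀ n i, u n i ∈ T n := fun n i => ((stdOrthonormalBasis ℝ (T n)) _).2
  have huo : ∀ n, Orthonormal ℝ (u n) := by
    intro n
    have h1 : Orthonormal ℝ (((stdOrthonormalBasis ℝ (T n)) : Fin (finrank ℝ (T n)) → T n) ∘
        Fin.castLE (hTdim n)) :=
      (stdOrthonormalBasis ℝ (T n)).orthonormal.comp _ (Fin.castLE_injective _)
    rw [orthonormal_iff_ite] at h1 ⊢
    intro i j
    have := h1 i j
    rw [Submodule.coe_inner] at this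
    simpa [Fin.castLE_injective (hTdim n) |>.eq_iff] using this
  -- compactness
  have hball : ∀ n, u n ∈ Metric.closedBall (0 : Fin m → E') 1 := by
    intro n
    rw [mem_closedBall, dist_zero_right]
    refine (pi_norm_le_iff_of_nonneg zero_le_one).2 fun i => ?_
    rw [(huo n).1 i]
  obtain ⟨g, -, φ, hφ, hg⟩ :=
    (isCompact_closedBall (0 : Fin m → E') 1).tendsto_subseq hball
  have hgi : ∀ i, Tendsto (fun n => u (φ n) i) atTop (nhds (g i)) := fun i =>
    tendsto_pi_nhds.mp hg i
  have hgo : Orthonormal ℝ g := by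
    rw [orthonormal_iff_ite]
    intro i j
    have ht : Tendsto (fun n => (inner ℝ (u (φ n) i) (u (φ n) j) : ℝ)) atTop
        (nhds (inner ℝ (g i) (g j))) := (hgi i).inner (hgi j)
    have hconst : ∀ n, (inner ℝ (u (φ n) i) (u (φ n) j) : ℝ) = if i = j then 1 else 0 :=
      fun n => (orthonormal_iff_ite.mp (huo (φ n))) i j
    have ht2 : Tendsto (fun n => (inner ℝ (u (φ n) i) (u (φ n) j) : ℝ)) atTop
        (nhds (if i = j then 1 else 0)) := by
      simp only [hconst]
      exact tendsto_const_nhds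
    exact tendsto_nhds_unique ht ht2
  refine ⟨fun i => e.symm (g i), ?_, ?_⟩
  · exact hgo.linearIndependent.map' (e.symm.toLinearEquiv : E' →ₗ[ℝ] V)
      (LinearMap.ker_eq_bot_of_injective e.symm.toLinearEquiv.injective)
  · intro i
    have hmem : ∀ n, (c (φ n), e.symm (u (φ n) i)) ∈ F := by
      intro n
      obtain ⟨w, hw, hew⟩ := Submodule.mem_map.mp (humem (φ n) i)
      have hwv : e.symm (u (φ n) i) = w := by
        rw [← hew]
        exact e.symm_apply_apply w
      have : e.symm (u (φ n) i) ∈ {v : V | (c (φ n), v) ∈ F} := by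
        rw [hS (φ n), hwv]; exact hw
      exact this
    have h1 : Tendsto (fun n => c (φ n)) atTop (nhds b) := by
      rw [tendsto_iff_dist_tendsto_zero]
      refine squeeze_zero (fun n => dist_nonneg) (fun n => ?_)
        tendsto_one_div_add_atTop_nhds_zero_nat
      refine le_trans (hc (φ n)).le ?_
      gcongr
      exact_mod_cast hφ.le_apply
    have h2 : Tendsto (fun n => e.symm (u (φ n) i)) atTop (nhds (e.symm (g i))) :=
      (e.symm.continuous.tendsto _).comp (hgi i)
    exact mem_closure_of_tendsto (h1.prodMk_nhds h2) (Filter.Eventually.of_forall hmem)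

omit [FiniteDimensional ℝ V] in
lemma GlaeserAux.lt_fib {ρ : Set (X × V) → Set (X × V)} (hρ : IsGlaeserOperation ρ)
    {E : Set (X × V)} (hE : IsBundle E) (k : ℕ) (b : X) {S T : Submodule ℝ V}
    (hSb : {v : V | (b, v) ∈ ρ^[k] E} = (S : Set V))
    (hTb : {v : V | (b, v) ∈ ρ^[k + 1] E} = (T : Set V))
    (hne : {v : V | (b, v) ∈ ρ^[k] E} ≠ {v : V | (b, v) ∈ ρ^[k + 1] E}) : S < T := by
  have hsub : (S : Set V) ⊆ (T : Set V) := by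
    rw [← hSb, ← hTb]
    intro v hv
    exact GlaeserAux.iter_le hρ hE k hv
  refine lt_of_le_of_ne (SetLike.coe_subset_coe.mp hsub) ?_
  intro hST
  apply hne
  rw [hSb, hTb, hST]

/-- The key dimension-counting induction: a point where the fibres of levels `k` and `k+1`
differ has fibre dimension at least `k/2 + 1` at level `k+1`. -/
lemma GlaeserAux.key {ρ : Set (X × V) → Set (X × V)} (hρ : IsGlaeserOperation ρ)
    {E : Set (X × V)} (hE : IsBundle E) :
    ∀ k : ℕ, ∀ b : X, {v : V | (b, v) ∈ ρ^[k] E} ≠ {v : V | (b, v) ∈ ρ^[k + 1] E} →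
      ∀ T : Submodule ℝ V, {v : V | (b, v) ∈ ρ^[k + 1] E} = (T : Set V) →
      k / 2 + 1 ≤ finrank ℝ T := by
  intro k
  induction k using Nat.strong_induction_on with
  | _ k ih =>
    match k with
    | 0 =>
      intro b hne T hT
      obtain ⟨S, hSb⟩ := GlaeserAux.bundle_iter hρ hE 0 b
      have hlt := GlaeserAux.lt_fib hρ hE 0 b hSb hT hne
      have := Submodule.finrank_lt_finrank_of_lt hlt
      omega
    | 1 =>
      intro b hne T hT
      obtain ⟨S, hSb⟩ := GlaeserAux.bundle_iter hρ hE 1 b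
      have hlt := GlaeserAux.lt_fib hρ hE 1 b hSb hT hne
      have := Submodule.finrank_lt_finrank_of_lt hlt
      omega
    | (k + 2) =>
      intro b hne T hT
      obtain ⟨S', hS'⟩ := GlaeserAux.bundle_iter hρ hE (k + 2) b
      have hlt := GlaeserAux.lt_fib hρ hE (k + 2) b hS' hT hne
      -- lower bound on finrank S' via semicontinuity
      have hsem : ∀ ε : ℝ, 0 < ε → ∃ c : X, dist c b < ε ∧ ∃ Sc : Submodule ℝ V,
          {v : V | (c, v) ∈ ρ^[k + 1] E} = (Sc : Set V) ∧ k / 2 + 1 ≤ finrank ℝ Sc := by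
        intro ε hε
        obtain ⟨c₁, hc₁, hne₁⟩ := GlaeserAux.bad_step hρ hE (k + 1) b hne (ε / 2) (by linarith)
        obtain ⟨c, hcc₁, hnec⟩ := GlaeserAux.bad_step hρ hE k c₁ hne₁ (ε / 2) (by linarith)
        obtain ⟨Sc, hSc⟩ := GlaeserAux.bundle_iter hρ hE (k + 1) c
        refine ⟨c, ?_, Sc, hSc, ih k (by omega) c hnec Sc hSc⟩
        calc dist c b ≤ dist c c₁ + dist c₁ b := dist_triangle _ _ _
          _ < ε / 2 + ε / 2 := by exact add_lt_add hcc₁ hc₁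
          _ = ε := by ring
      obtain ⟨f, hfli, hfcl⟩ := GlaeserAux.semicont hsem
      have hmemS' : ∀ i, f i ∈ S' := by
        intro i
        have h1 : (b, f i) ∈ ρ (ρ^[k + 1] E) :=
          hρ.closure_subset _ (GlaeserAux.bundle_iter hρ hE (k + 1)) (hfcl i)
        have h2 : (b, f i) ∈ ρ^[k + 2] E := by
          rw [Function.iterate_succ_apply']
          exact h1
        have : f i ∈ {v : V | (b, v) ∈ ρ^[k + 2] E} := h2
        rw [hS'] at this
        exact this
      have h1 : k / 2 + 1 ≤ finrank ℝ S' := GlaeserAux.le_finrank_of_li hfli hmemS'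
      have h2 : finrank ℝ S' < finrank ℝ T := Submodule.finrank_lt_finrank_of_lt hlt
      omega

end Aux

/-- The saturation `Ê = ρ^[2r] E` of a bundle under a Glaeser operation is closed. -/
theorem glaeser_saturation_isClosed {X V : Type*} [MetricSpace X] [NormedAddCommGroup V]
    [NormedSpace ℝ V] [FiniteDimensional ℝ V] {r : ℕ} (hr : Module.finrank ℝ V = r)
    (ρ : Set (X × V) → Set (X × V)) (hρ : IsGlaeserOperation ρ)
    (E : Set (X × V)) (hE : IsBundle E) :
    IsClosed (ρ^[2 * r] E) := by
  apply isClosed_of_closure_subset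
  rintro ⟨a, v⟩ hav
  by_contra hnot
  have hv : (a, v) ∈ ρ^[2 * r + 1] E := by
    rw [Function.iterate_succ_apply']
    exact hρ.closure_subset _ (GlaeserAux.bundle_iter hρ hE (2 * r)) hav
  have hne : {w : V | (a, w) ∈ ρ^[2 * r] E} ≠ {w : V | (a, w) ∈ ρ^[2 * r + 1] E} := by
    intro heq
    apply hnot
    have : v ∈ {w : V | (a, w) ∈ ρ^[2 * r + 1] E} := hv
    rw [← heq] at this
    exact this
  obtain ⟨T, hT⟩ := GlaeserAux.bundle_iter hρ hE (2 * r + 1) a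
  have hkey := GlaeserAux.key hρ hE (2 * r) a hne T hT
  have hle : finrank ℝ T ≤ r := hr ▸ T.finrank_le
  omega
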